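/- arXiv:1906.01317 — 2 statements merged into one kernel-verified Lean document; each statement's English description precedes it below -/
import Mathlib

section
/- Let N = 4 and define Z⁰_{1,0}(x) = (1 − |x̄|² − x₄²)/(|x̄|² + (x₄+1)²)² (which equals −∂W_{λ,0}/∂λ at λ = 1). Then there exists a constant C > 0 such that for all R ≥ 2: | ∫_{B⁴_+(0,R)} W_{1,0}(x) Z⁰_{1,0}(x) dx + (π/4) |S²| log R | ≤ C, where B⁴_+(0,R) = {x ∈ ℝ⁴ : x₄ > 0, |x| < R} and |S²| = 4π is the surface area of the unit 2-sphere. In particular ∫_{B⁴_+(0,R)} W_{1,0} Z⁰_{1,0} dx = −(π/4)|S²| log R + O(1) as R → ∞. -/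
open MeasureTheory Filter Topology

noncomputable section

/-- The model for `ℝ^N_+`: pairs `(x̄, t)` with `x̄ ∈ ℝ^n` (Euclidean) and `t ∈ ℝ`;
the open upper half-space is `{p | 0 < p.2}`. -/
abbrev HSp (n : ℕ) := EuclideanSpace ℝ (Fin n) × ℝ

/-- The open upper half-space. -/
def upperHalf (n : ℕ) : Set (HSp n) := {p | 0 < p.2}

/-- Directional derivative of `f` at `x` in direction `v`. -/
def pdv {n : ℕ} (v : HSp n) (f : HSp n → ℝ) (x : HSp n) : ℝ := fderiv ℝ f x v

/-- The `i`-th horizontal standard basis vector. -/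
def eH {n : ℕ} (i : Fin n) : HSp n := (EuclideanSpace.single i 1, 0)

/-- The vertical standard basis vector. -/
def eV {n : ℕ} : HSp n := (0, 1)

/-- The Laplacian `Δf = ∑ᵢ ∂ᵢᵢ f + ∂_NN f`. -/
def lap {n : ℕ} (f : HSp n → ℝ) (x : HSp n) : ℝ :=
  (∑ i : Fin n, pdv (eH i) (pdv (eH i) f) x) + pdv eV (pdv eV f) x

/-- The Euclidean length `|x|` of a point `x = (x̄, t)`. -/
def rad {n : ℕ} (x : HSp n) : ℝ := Real.sqrt (‖x.1‖ ^ 2 + x.2 ^ 2)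

/-- The bubble `W_{λ,ξ}`. -/
def Bub (N : ℕ) (lam : ℝ) (ξ : EuclideanSpace ℝ (Fin (N - 1))) (x : HSp (N - 1)) : ℝ :=
  lam ^ (((N : ℝ) - 2) / 2) / (‖x.1 - ξ‖ ^ 2 + (x.2 + lam) ^ 2) ^ (((N : ℝ) - 2) / 2)

/-- The trace `w_{λ,ξ}` of the bubble on the boundary. -/
def bub (N : ℕ) (lam : ℝ) (ξ y : EuclideanSpace ℝ (Fin (N - 1))) : ℝ := Bub N lam ξ (y, 0)

/-- The bubble `W_{1,0}` in dimension `N = 4`. -/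
def W4 : HSp 3 → ℝ := fun x => 1 / (‖x.1‖ ^ 2 + (x.2 + 1) ^ 2)

/-- `Z⁰_{1,0}` in dimension `N = 4`. -/
def Z4 : HSp 3 → ℝ := fun x => (1 - ‖x.1‖ ^ 2 - x.2 ^ 2) / (‖x.1‖ ^ 2 + (x.2 + 1) ^ 2) ^ 2


open Set

section Aux

/-! ### Auxiliary machinery -/

lemma cont_rad {n : ℕ} : Continuous (rad (n := n)) :=
  Real.continuous_sqrt.comp (((continuous_fst.norm).pow 2).add ((continuous_snd).pow 2))

lemma rad_nonneg {n : ℕ} (y : HSp n) : 0 ≤ rad y := Real.sqrt_nonneg _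

lemma sq_rad {n : ℕ} (y : HSp n) : rad y ^ 2 = ‖y.1‖ ^ 2 + y.2 ^ 2 :=
  Real.sq_sqrt (by positivity)

lemma abs_snd_le_rad {n : ℕ} (y : HSp n) : |y.2| ≤ rad y := by
  nlinarith [sq_rad y, rad_nonneg y, sq_nonneg ‖y.1‖, abs_nonneg y.2, sq_abs y.2]

lemma norm_fst_le_rad {n : ℕ} (y : HSp n) : ‖y.1‖ ≤ rad y := by
  nlinarith [sq_rad y, rad_nonneg y, sq_nonneg y.2, norm_nonneg y.1]

lemma norm_le_rad (y : HSp 3) : ‖y‖ ≤ rad y := by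
  rw [Prod.norm_def]
  exact max_le (norm_fst_le_rad y) ((Real.norm_eq_abs _).le.trans (abs_snd_le_rad y))

def rho (y : HSp 3) : ℝ := ((rad y) ^ 4)⁻¹

lemma rho_nonneg (y : HSp 3) : 0 ≤ rho y := by
  have := rad_nonneg y; unfold rho; positivity

lemma meas_rho : Measurable rho := (cont_rad.pow 4).measurable.inv

instance haar_hsp : (volume : Measure (HSp 3)).IsAddHaarMeasure := by
  rw [show (volume : Measure (HSp 3)) = (volume.prod volume) from rfl]
  infer_instance

/-! ### A measure-preserving identification with `ℝ⁴` and the radial formula -/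

def eqv : EuclideanSpace ℝ (Fin 4) ≃ᵐ HSp 3 :=
  (MeasurableEquiv.toLp 2 (Fin 4 → ℝ)).symm.trans <|
    (MeasurableEquiv.piFinSuccAbove (fun _ : Fin 4 => ℝ) (Fin.last 3)).trans <|
      (MeasurableEquiv.prodComm :  ℝ × (Fin 3 → ℝ) ≃ᵐ (Fin 3 → ℝ) × ℝ).trans <|
        MeasurableEquiv.prodCongr (MeasurableEquiv.toLp 2 (Fin 3 → ℝ)).symm.symm
          (MeasurableEquiv.refl ℝ)

lemma eqv_mp : MeasurePreserving (⇑eqv) volume volume := by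
  have h1 := EuclideanSpace.volume_preserving_symm_measurableEquiv_toLp (Fin 4)
  have h2 := volume_preserving_piFinSuccAbove (fun _ : Fin 4 => ℝ) (Fin.last 3)
  have h3 : MeasurePreserving (⇑(MeasurableEquiv.prodComm : ℝ × (Fin 3 → ℝ) ≃ᵐ (Fin 3 → ℝ) × ℝ))
      volume volume := Measure.measurePreserving_swap
  have h4 : MeasurePreserving
      (⇑(MeasurableEquiv.prodCongr (MeasurableEquiv.toLp 2 (Fin 3 → ℝ)).symm.symm
        (MeasurableEquiv.refl ℝ))) volume volume :=
    ((EuclideanSpace.volume_preserving_symm_measurableEquiv_toLp (Fin 3)).symm _).prod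
      (MeasurePreserving.id _)
  exact ((h4.comp h3).comp h2).comp h1

lemma rad_eqv (z : EuclideanSpace ℝ (Fin 4)) : rad (eqv z) = ‖z‖ := by
  show Real.sqrt (‖(MeasurableEquiv.toLp 2 (Fin 3 → ℝ)).symm.symm
      (fun j : Fin 3 => z ((Fin.last 3).succAbove j))‖ ^ 2 + z (Fin.last 3) ^ 2) = ‖z‖
  simp only [EuclideanSpace.norm_eq]
  rw [Real.sq_sqrt (by positivity)]
  congr 1
  simp only [Real.norm_eq_abs, sq_abs]
  show (∑ j : Fin 3, z ((Fin.last 3).succAbove j) ^ 2) + z (Fin.last 3) ^ 2 = _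
  rw [Fin.sum_univ_three, Fin.sum_univ_four]
  rfl

lemma vol4_ball : (volume (Metric.ball (0:EuclideanSpace ℝ (Fin 4)) 1)).toReal = Real.pi^2 / 2 := by
  rw [EuclideanSpace.volume_ball]
  have hg : Real.Gamma ((Fintype.card (Fin 4) : ℝ) / 2 + 1) = 2 := by
    norm_num
  rw [hg]
  simp only [Fintype.card_fin, ENNReal.ofReal_one, one_pow, one_mul]
  rw [ENNReal.toReal_ofReal (by positivity)]
  rw [show Real.sqrt Real.pi ^ 4 = (Real.sqrt Real.pi ^ 2) ^ 2 by ring,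
    Real.sq_sqrt Real.pi_nonneg]

lemma integral_rad_eq (f : ℝ → ℝ) :
    ∫ y : HSp 3, f (rad y) = (2 * Real.pi ^ 2) * ∫ r in Ioi (0:ℝ), r ^ 3 * f r := by
  have h := eqv_mp.integral_comp eqv.measurableEmbedding (fun y => f (rad y))
  rw [← h]
  simp only [rad_eqv]
  rw [integral_fun_norm_addHaar volume f]
  simp only [finrank_euclideanSpace_fin, measureReal_def, vol4_ball, smul_eq_mul, nsmul_eq_mul]
  rw [show ∀ a : ℝ, (4:ℕ) * (Real.pi ^ 2 / 2 * a) = 2 * Real.pi ^2 * a from fun a => by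
    push_cast; ring]

/-! ### The annulus integral -/

lemma integral_Ann (S : ℝ) (hS : 1 ≤ S) :
    ∫ y in {y : HSp 3 | 1 < rad y ∧ rad y < S}, rho y
      = 2 * Real.pi ^ 2 * Real.log S := by
  have hset : {y : HSp 3 | 1 < rad y ∧ rad y < S} = rad ⁻¹' (Ioo 1 S) := rfl
  have hmeasIoo : MeasurableSet (Ioo (1:ℝ) S) := measurableSet_Ioo
  rw [hset, ← integral_indicator (cont_rad.measurable hmeasIoo)]
  have h1 : ∀ y : HSp 3, (rad ⁻¹' (Ioo 1 S)).indicator rho y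
      = (Ioo (1:ℝ) S).indicator (fun r => (r ^ 4)⁻¹) (rad y) := fun y =>
    Set.indicator_comp_right (g := fun r : ℝ => (r ^ 4)⁻¹) rad (s := Ioo 1 S) (x := y)
  simp only [h1]
  rw [integral_rad_eq]
  have h2 : ∀ r ∈ Ioi (0:ℝ), r ^ 3 * (Ioo (1:ℝ) S).indicator (fun r => (r ^ 4)⁻¹) r
      = (Ioo (1:ℝ) S).indicator (fun r => r⁻¹) r := by
    intro r _
    by_cases hr : r ∈ Ioo (1:ℝ) S
    · rw [Set.indicator_of_mem hr, Set.indicator_of_mem hr]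
      have hr0 : r ≠ 0 := by have := hr.1; intro h; simp [h] at this; linarith
      rw [show r ^ 4 = r ^ 3 * r by ring, mul_inv, ← mul_assoc,
        mul_inv_cancel₀ (pow_ne_zero 3 hr0), one_mul]
    · rw [Set.indicator_of_notMem hr, Set.indicator_of_notMem hr, mul_zero]
  rw [setIntegral_congr_fun measurableSet_Ioi h2]
  rw [integral_indicator hmeasIoo, Measure.restrict_restrict hmeasIoo]
  have hii : Ioo (1:ℝ) S ∩ Ioi 0 = Ioo 1 S := by
    rw [Set.inter_eq_left]
    exact fun r hr => lt_trans zero_lt_one hr.1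
  rw [hii]
  rw [← integral_Ioc_eq_integral_Ioo, ← intervalIntegral.integral_of_le hS]
  rw [integral_inv (by simp [Set.uIcc_of_le hS])]
  rw [div_one]

/-! ### Measurability of the various sets -/

lemma measSet_ann (S : ℝ) : MeasurableSet {y : HSp 3 | 1 < rad y ∧ rad y < S} := by
  simp only [Set.setOf_and]
  exact (measurableSet_lt measurable_const cont_rad.measurable).inter
    (measurableSet_lt cont_rad.measurable measurable_const)

lemma measSet_D (S : ℝ) : MeasurableSet {y : HSp 3 | 0 < y.2 ∧ 1 < rad y ∧ rad y < S} := by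
  simp only [Set.setOf_and]
  exact (measurableSet_lt measurable_const measurable_snd).inter
    ((measurableSet_lt measurable_const cont_rad.measurable).inter
      (measurableSet_lt cont_rad.measurable measurable_const))

lemma measSet_D' (S : ℝ) : MeasurableSet {y : HSp 3 | y.2 < 0 ∧ 1 < rad y ∧ rad y < S} := by
  simp only [Set.setOf_and]
  exact (measurableSet_lt measurable_snd measurable_const).inter
    ((measurableSet_lt measurable_const cont_rad.measurable).inter
      (measurableSet_lt cont_rad.measurable measurable_const))

lemma measSet_B (S : ℝ) : MeasurableSet {y : HSp 3 | 1 < y.2 ∧ rad y < S} := by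
  simp only [Set.setOf_and]
  exact (measurableSet_lt measurable_const measurable_snd).inter
    (measurableSet_lt cont_rad.measurable measurable_const)

lemma measSet_A (R : ℝ) : MeasurableSet {x : HSp 3 | 0 < x.2 ∧ rad x < R} := by
  simp only [Set.setOf_and]
  exact (measurableSet_lt measurable_const measurable_snd).inter
    (measurableSet_lt cont_rad.measurable measurable_const)

lemma measSet_Om (R : ℝ) :
    MeasurableSet {y : HSp 3 | 1 < y.2 ∧ rad (y.1, y.2 - 1) < R} := by
  simp only [Set.setOf_and]
  refine (measurableSet_lt measurable_const measurable_snd).inter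
    (measurableSet_lt (Continuous.measurable ?_) measurable_const)
  exact cont_rad.comp (continuous_fst.prodMk (continuous_snd.sub continuous_const))

lemma null_snd_zero : volume {y : HSp 3 | y.2 = 0} = 0 := by
  have : {y : HSp 3 | y.2 = 0} = (univ : Set (EuclideanSpace ℝ (Fin 3))) ×ˢ ({0} : Set ℝ) := by
    ext y; exact ⟨fun h => ⟨trivial, h⟩, fun h => h.2⟩
  rw [this, show (volume : Measure (HSp 3)) = (volume.prod volume) from rfl,
    Measure.prod_prod, Real.volume_singleton, mul_zero]

lemma integrableOn_rho_Ann (S : ℝ) :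
    IntegrableOn rho {y : HSp 3 | 1 < rad y ∧ rad y < S} := by
  apply Measure.integrableOn_of_bounded (M := 1)
  · refine ne_of_lt (lt_of_le_of_lt (measure_mono ?_)
      (measure_ball_lt_top (x := (0 : HSp 3)) (r := S)))
    intro y hy
    simp only [Metric.mem_ball, dist_zero_right]
    exact lt_of_le_of_lt (norm_le_rad y) hy.2
  · exact meas_rho.aestronglyMeasurable
  · rw [ae_restrict_iff' (measSet_ann S)]
    refine ae_of_all _ fun y hy => ?_
    rw [Real.norm_eq_abs, abs_of_nonneg (rho_nonneg y)]
    rw [rho]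
    have h1 : (1:ℝ) ≤ rad y ^ 4 := one_le_pow₀ hy.1.le
    rw [inv_le_one_iff₀]
    right; exact h1

/-! ### Reflection symmetry: the upper half of the annulus -/

def nu : HSp 3 ≃ᵐ HSp 3 :=
  MeasurableEquiv.prodCongr (MeasurableEquiv.refl _) (MeasurableEquiv.neg ℝ)

lemma nu_mp : MeasurePreserving (⇑nu) volume volume :=
  (MeasurePreserving.id volume).prod (Measure.measurePreserving_neg volume)

lemma nu_apply (y : HSp 3) : nu y = (y.1, -y.2) := rfl

lemma rad_nu (y : HSp 3) : rad (nu y) = rad y := by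
  show Real.sqrt (‖y.1‖^2 + (-y.2)^2) = _
  rw [neg_sq]; rfl

lemma rad_pair_neg (y : HSp 3) : rad ((y.1, -y.2) : HSp 3) = rad y := by
  show Real.sqrt (‖y.1‖^2 + (-y.2)^2) = _
  rw [neg_sq]; rfl

lemma integral_D (S : ℝ) (hS : 1 ≤ S) :
    ∫ y in {y : HSp 3 | 0 < y.2 ∧ 1 < rad y ∧ rad y < S}, rho y
      = Real.pi ^ 2 * Real.log S := by
  have hmD : MeasurableSet {y : HSp 3 | 0 < y.2 ∧ 1 < rad y ∧ rad y < S} := measSet_D S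
  have hmD' : MeasurableSet {y : HSp 3 | y.2 < 0 ∧ 1 < rad y ∧ rad y < S} := measSet_D' S
  have hpre : nu ⁻¹' {y : HSp 3 | 0 < y.2 ∧ 1 < rad y ∧ rad y < S}
      = {y : HSp 3 | y.2 < 0 ∧ 1 < rad y ∧ rad y < S} := by
    ext y
    simp only [Set.mem_preimage, Set.mem_setOf_eq, nu_apply, rad_pair_neg]
    constructor
    · rintro ⟨h1, h2⟩; exact ⟨by linarith, h2⟩
    · rintro ⟨h1, h2⟩; exact ⟨by linarith, h2⟩
  have hswap : ∫ y in {y : HSp 3 | y.2 < 0 ∧ 1 < rad y ∧ rad y < S}, rho y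
      = ∫ y in {y : HSp 3 | 0 < y.2 ∧ 1 < rad y ∧ rad y < S}, rho y := by
    have h0 := nu_mp.setIntegral_preimage_emb nu.measurableEmbedding rho
      {y : HSp 3 | 0 < y.2 ∧ 1 < rad y ∧ rad y < S}
    rw [hpre] at h0
    rw [← h0]
    apply setIntegral_congr_fun hmD'
    intro y _
    exact (show rho (nu y) = rho y by rw [rho, rho, rad_nu]).symm
  have hae : ({y : HSp 3 | 1 < rad y ∧ rad y < S} : Set (HSp 3)) =ᵐ[volume]
      ({y : HSp 3 | 0 < y.2 ∧ 1 < rad y ∧ rad y < S} ∪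
        {y : HSp 3 | y.2 < 0 ∧ 1 < rad y ∧ rad y < S} : Set (HSp 3)) := by
    rw [Filter.eventuallyEq_set]
    have hns : ∀ᵐ y : HSp 3, y.2 ≠ 0 := by
      rw [ae_iff]; simpa using null_snd_zero
    filter_upwards [hns] with y hy
    simp only [Set.mem_union, Set.mem_setOf_eq]
    constructor
    · intro h
      rcases lt_or_gt_of_ne hy with h2 | h2
      · exact Or.inr ⟨h2, h⟩
      · exact Or.inl ⟨h2, h⟩
    · rintro (h | h) <;> exact h.2
  have hdisj : Disjoint {y : HSp 3 | 0 < y.2 ∧ 1 < rad y ∧ rad y < S}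
      {y : HSp 3 | y.2 < 0 ∧ 1 < rad y ∧ rad y < S} := by
    rw [Set.disjoint_left]
    rintro y ⟨h1, _⟩ ⟨h2, _⟩
    linarith
  have hID : IntegrableOn rho {y : HSp 3 | 0 < y.2 ∧ 1 < rad y ∧ rad y < S} :=
    (integrableOn_rho_Ann S).mono_set fun y hy => hy.2
  have hID' : IntegrableOn rho {y : HSp 3 | y.2 < 0 ∧ 1 < rad y ∧ rad y < S} :=
    (integrableOn_rho_Ann S).mono_set fun y hy => hy.2
  have hA := integral_Ann S hS
  rw [setIntegral_congr_set hae, setIntegral_union hdisj hmD' hID hID', hswap] at hA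
  linarith

/-! ### The strip correction -/

def psi (y : HSp 3) : ℝ := (4 / (1 + ‖y.1‖ ^ 2) ^ 2) * Set.indicator (Ioc (0:ℝ) 1) 1 y.2

lemma psi_nonneg (y : HSp 3) : 0 ≤ psi y := by
  unfold psi
  apply mul_nonneg (by positivity)
  exact Set.indicator_nonneg (fun _ _ => zero_le_one) _

lemma integrable_psi : Integrable psi (volume : Measure (HSp 3)) := by
  have hf : Integrable (fun x : EuclideanSpace ℝ (Fin 3) => 4 / (1 + ‖x‖ ^ 2) ^ 2) volume := by
    have h0 : Integrable (fun x : EuclideanSpace ℝ (Fin 3) => ((1:ℝ) + ‖x‖ ^ 2) ^ (-(4:ℝ) / 2))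
        volume := integrable_rpow_neg_one_add_norm_sq (by simp [finrank_euclideanSpace_fin]; norm_num)
    have := h0.const_mul 4
    refine this.congr (ae_of_all _ fun x => ?_)
    have h1 : (0:ℝ) < 1 + ‖x‖ ^ 2 := by positivity
    show 4 * ((1:ℝ) + ‖x‖ ^ 2) ^ (-(4:ℝ)/2) = _
    rw [show (-(4:ℝ)/2) = -2 by norm_num, Real.rpow_neg h1.le, Real.rpow_two]
    rw [show (fun x : EuclideanSpace ℝ (Fin 3) => 4 / (1 + ‖x‖ ^ 2) ^ 2) x
      = 4 / (1 + ‖x‖ ^ 2) ^ 2 from rfl, div_eq_mul_inv]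
  have hg : Integrable (Set.indicator (Ioc (0:ℝ) 1) (1 : ℝ → ℝ)) volume := by
    rw [integrable_indicator_iff measurableSet_Ioc]
    exact (integrableOn_const_iff (C := (1:ℝ))).mpr (Or.inr (by simp [Real.volume_Ioc]))
  exact hf.mul_prod hg

lemma rho_le_psi (y : HSp 3) (h0 : 0 < y.2) (h1 : y.2 ≤ 1) (hr : 1 < rad y) :
    rho y ≤ psi y := by
  have hmem : y.2 ∈ Ioc (0:ℝ) 1 := ⟨h0, h1⟩
  unfold psi
  rw [Set.indicator_of_mem hmem, Pi.one_apply, mul_one, rho]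
  have h2 : ‖y.1‖ ^ 2 ≤ rad y ^ 2 := by nlinarith [sq_rad y, sq_nonneg y.2]
  have h3 : (1:ℝ) < rad y ^ 2 := by nlinarith
  rw [inv_eq_one_div, div_le_div_iff₀ (by positivity) (by positivity)]
  nlinarith [sq_nonneg ((1 + ‖y.1‖^2) - 2 * rad y ^2), sq_nonneg (1 + ‖y.1‖^2)]

lemma integral_B_bounds (S : ℝ) (hS : 1 ≤ S) :
    Real.pi ^ 2 * Real.log S - ∫ y, psi y
      ≤ ∫ y in {y : HSp 3 | 1 < y.2 ∧ rad y < S}, rho y ∧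
    (∫ y in {y : HSp 3 | 1 < y.2 ∧ rad y < S}, rho y) ≤ Real.pi ^ 2 * Real.log S := by
  have hBD : {y : HSp 3 | 1 < y.2 ∧ rad y < S} ⊆ {y : HSp 3 | 0 < y.2 ∧ 1 < rad y ∧ rad y < S} := by
    rintro y ⟨h1, h2⟩
    refine ⟨by linarith, ?_, h2⟩
    calc (1:ℝ) < y.2 := h1
    _ ≤ |y.2| := le_abs_self _
    _ ≤ rad y := abs_snd_le_rad y
  have hmB := measSet_B S
  have hmDmB : MeasurableSet ({y : HSp 3 | 0 < y.2 ∧ 1 < rad y ∧ rad y < S} \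
      {y : HSp 3 | 1 < y.2 ∧ rad y < S}) := (measSet_D S).diff hmB
  have hIB : IntegrableOn rho {y : HSp 3 | 1 < y.2 ∧ rad y < S} :=
    (integrableOn_rho_Ann S).mono_set fun y hy => (hBD hy).2
  have hIDmB : IntegrableOn rho ({y : HSp 3 | 0 < y.2 ∧ 1 < rad y ∧ rad y < S} \
      {y : HSp 3 | 1 < y.2 ∧ rad y < S}) :=
    (integrableOn_rho_Ann S).mono_set fun y hy => hy.1.2
  have hsplit : ∫ y in {y : HSp 3 | 0 < y.2 ∧ 1 < rad y ∧ rad y < S}, rho y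
      = (∫ y in {y : HSp 3 | 1 < y.2 ∧ rad y < S}, rho y)
        + ∫ y in ({y : HSp 3 | 0 < y.2 ∧ 1 < rad y ∧ rad y < S} \
            {y : HSp 3 | 1 < y.2 ∧ rad y < S}), rho y := by
    rw [← setIntegral_union disjoint_sdiff_self_right hmDmB hIB hIDmB,
      Set.union_diff_cancel hBD]
  have hE0 : 0 ≤ ∫ y in ({y : HSp 3 | 0 < y.2 ∧ 1 < rad y ∧ rad y < S} \
      {y : HSp 3 | 1 < y.2 ∧ rad y < S}), rho y :=
    setIntegral_nonneg hmDmB fun y _ => rho_nonneg y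
  have hE1 : (∫ y in ({y : HSp 3 | 0 < y.2 ∧ 1 < rad y ∧ rad y < S} \
      {y : HSp 3 | 1 < y.2 ∧ rad y < S}), rho y) ≤ ∫ y, psi y := by
    have step1 : (∫ y in ({y : HSp 3 | 0 < y.2 ∧ 1 < rad y ∧ rad y < S} \
        {y : HSp 3 | 1 < y.2 ∧ rad y < S}), rho y)
        ≤ ∫ y in ({y : HSp 3 | 0 < y.2 ∧ 1 < rad y ∧ rad y < S} \
          {y : HSp 3 | 1 < y.2 ∧ rad y < S}), psi y := by
      apply setIntegral_mono_on hIDmB integrable_psi.integrableOn hmDmB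
      rintro y ⟨⟨h0, h1, h2⟩, hn⟩
      have hy1 : y.2 ≤ 1 := by
        by_contra hc
        exact hn ⟨by linarith, h2⟩
      exact rho_le_psi y h0 hy1 h1
    refine step1.trans (setIntegral_le_integral integrable_psi
      (ae_of_all _ fun y => psi_nonneg y))
  have hD := integral_D S hS
  constructor <;> linarith

/-! ### The decomposition `W4 * Z4 = gg - hh` and the translation -/

def qq (x : HSp 3) : ℝ := ‖x.1‖ ^ 2 + (x.2 + 1) ^ 2
def gg (x : HSp 3) : ℝ := (2 * x.2 + 2) / (qq x) ^ 3
def hh (x : HSp 3) : ℝ := ((qq x) ^ 2)⁻¹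

lemma cont_qq : Continuous qq :=
  ((continuous_fst.norm).pow 2).add (((continuous_snd).add continuous_const).pow 2)

lemma qq_pos (x : HSp 3) (hx : 0 < x.2) : 1 < qq x := by
  have := sq_nonneg ‖x.1‖; unfold qq; nlinarith

lemma W4Z4_eq (x : HSp 3) (hx : 0 < x.2) : W4 x * Z4 x = gg x - hh x := by
  have hq : qq x ≠ 0 := by have := qq_pos x hx; intro h; rw [h] at this; linarith
  unfold W4 Z4 gg hh qq at *
  field_simp
  ring

def tau : HSp 3 ≃ᵐ HSp 3 :=
  MeasurableEquiv.prodCongr (MeasurableEquiv.refl _)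
    (Homeomorph.addRight (1:ℝ)).toMeasurableEquiv

lemma tau_apply (x : HSp 3) : tau x = (x.1, x.2 + 1) := rfl

lemma tau_mp : MeasurePreserving (⇑tau) volume volume :=
  (MeasurePreserving.id volume).prod (measurePreserving_add_right volume 1)

lemma rho_tau (x : HSp 3) : rho (tau x) = hh x := by
  rw [rho, tau_apply, hh]
  congr 1
  have h2 : rad ((x.1, x.2 + 1) : HSp 3) ^ 2 = qq x := sq_rad _
  calc rad ((x.1, x.2+1) : HSp 3) ^ 4 = (rad ((x.1, x.2+1) : HSp 3) ^ 2) ^ 2 := by ring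
  _ = qq x ^ 2 := by rw [h2]

lemma translate_h (R : ℝ) :
    ∫ x in {x : HSp 3 | 0 < x.2 ∧ rad x < R}, hh x
      = ∫ y in {y : HSp 3 | 1 < y.2 ∧ rad (y.1, y.2 - 1) < R}, rho y := by
  have hpre : tau ⁻¹' {y : HSp 3 | 1 < y.2 ∧ rad (y.1, y.2 - 1) < R}
      = {x : HSp 3 | 0 < x.2 ∧ rad x < R} := by
    ext x
    simp only [Set.mem_preimage, Set.mem_setOf_eq, tau_apply]
    rw [show ((x.1, x.2 + 1 - 1) : HSp 3) = x by rw [add_sub_cancel_right]]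
    constructor
    · rintro ⟨a, b⟩; exact ⟨by linarith, b⟩
    · rintro ⟨a, b⟩; exact ⟨by linarith, b⟩
  have h0 := tau_mp.setIntegral_preimage_emb tau.measurableEmbedding rho
    {y : HSp 3 | 1 < y.2 ∧ rad (y.1, y.2 - 1) < R}
  rw [hpre] at h0
  rw [← h0]
  exact setIntegral_congr_fun (measSet_A R) fun x _ => (rho_tau x).symm

lemma Om_subset (R : ℝ) (hR : 2 ≤ R) :
    {y : HSp 3 | 1 < y.2 ∧ rad (y.1, y.2 - 1) < R}
      ⊆ {y : HSp 3 | 1 < y.2 ∧ rad y < R + 2} := by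
  rintro y ⟨h1, h2⟩
  refine ⟨h1, ?_⟩
  have hs : rad ((y.1, y.2 - 1) : HSp 3) ^ 2 = ‖y.1‖ ^ 2 + (y.2 - 1) ^ 2 := sq_rad _
  have hy2 : y.2 - 1 ≤ rad ((y.1, y.2 - 1) : HSp 3) := by
    have := abs_snd_le_rad ((y.1, y.2 - 1) : HSp 3)
    calc y.2 - 1 ≤ |y.2 - 1| := le_abs_self _
    _ ≤ _ := this
  have hr2 : rad y ^ 2 < (R + 1) ^ 2 := by
    rw [sq_rad]
    have hrn := rad_nonneg ((y.1, y.2 - 1) : HSp 3)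
    nlinarith
  have : rad y < R + 1 := by nlinarith [rad_nonneg y]
  linarith

lemma subset_Om (R : ℝ) (hR : 2 ≤ R) :
    {y : HSp 3 | 1 < y.2 ∧ rad y < R}
      ⊆ {y : HSp 3 | 1 < y.2 ∧ rad (y.1, y.2 - 1) < R} := by
  rintro y ⟨h1, h2⟩
  refine ⟨h1, ?_⟩
  have hs : rad ((y.1, y.2 - 1) : HSp 3) ^ 2 = ‖y.1‖ ^ 2 + (y.2 - 1) ^ 2 := sq_rad _
  have h3 : rad ((y.1, y.2 - 1) : HSp 3) ^ 2 < rad y ^ 2 := by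
    rw [hs, sq_rad]; nlinarith
  nlinarith [rad_nonneg ((y.1, y.2 - 1) : HSp 3), rad_nonneg y]

/-! ### The integrable majorant of `gg` -/

def Phi (x : HSp 3) : ℝ := 2 * ((1:ℝ) + ‖x‖ ^ 2) ^ (-(5:ℝ)/2)

lemma Phi_nonneg (x : HSp 3) : 0 ≤ Phi x := by
  unfold Phi
  have : (0:ℝ) < 1 + ‖x‖ ^ 2 := by positivity
  positivity

lemma finrank_hsp : Module.finrank ℝ (HSp 3) = 4 := by
  rw [Module.finrank_prod, finrank_euclideanSpace_fin, Module.finrank_self]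

lemma integrable_Phi : Integrable Phi (volume : Measure (HSp 3)) := by
  have h0 : Integrable (fun x : HSp 3 => ((1:ℝ) + ‖x‖ ^ 2) ^ (-(5:ℝ)/2)) volume :=
    integrable_rpow_neg_one_add_norm_sq (by rw [finrank_hsp]; norm_num)
  exact h0.const_mul 2

lemma norm_sq_le (x : HSp 3) : ‖x‖ ^ 2 ≤ ‖x.1‖ ^ 2 + x.2 ^ 2 := by
  rw [Prod.norm_def]
  rcases max_cases ‖x.1‖ ‖x.2‖ with ⟨h1, _⟩ | ⟨h1, _⟩ <;> rw [h1]
  · nlinarith [norm_nonneg x.2, sq_abs x.2, Real.norm_eq_abs x.2, sq_nonneg x.2]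
  · have : ‖x.2‖ ^ 2 = x.2 ^ 2 := by rw [Real.norm_eq_abs, sq_abs]
    nlinarith [sq_nonneg ‖x.1‖]

lemma gg_le_Phi (x : HSp 3) (hx : 0 < x.2) : gg x ≤ Phi x := by
  have hq1 : 1 < qq x := qq_pos x hx
  have hq0 : (0:ℝ) < qq x := by linarith
  have h1 : 1 + ‖x‖ ^ 2 ≤ qq x := by
    have h2 := norm_sq_le x
    unfold qq at *
    nlinarith
  have hn0 : (0:ℝ) < 1 + ‖x‖ ^ 2 := by positivity
  have step1 : gg x ≤ 2 * (qq x) ^ (-(5:ℝ)/2) := by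
    have hup : 2 * x.2 + 2 ≤ 2 * Real.sqrt (qq x) := by
      have : x.2 + 1 ≤ Real.sqrt (qq x) := by
        rw [show qq x = ‖x.1‖ ^ 2 + (x.2+1)^2 from rfl]
        have := Real.sqrt_le_sqrt
          (show (x.2+1)^2 ≤ ‖x.1‖^2 + (x.2+1)^2 by nlinarith [sq_nonneg ‖x.1‖])
        rwa [Real.sqrt_sq (by linarith : (0:ℝ) ≤ x.2 + 1)] at this
      linarith
    have hrw : Real.sqrt (qq x) / (qq x) ^ 3 = (qq x) ^ (-(5:ℝ)/2) := by
      rw [Real.sqrt_eq_rpow, show ((qq x) ^ 3 : ℝ) = (qq x) ^ (3:ℝ) by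
        rw [← Real.rpow_natCast (qq x) 3]; norm_num]
      rw [← Real.rpow_sub hq0]
      norm_num
    calc gg x ≤ (2 * Real.sqrt (qq x)) / (qq x) ^ 3 := by
          unfold gg
          gcongr
    _ = 2 * (Real.sqrt (qq x) / (qq x) ^ 3) := by ring
    _ = 2 * (qq x) ^ (-(5:ℝ)/2) := by rw [hrw]
  have step2 : (qq x) ^ (-(5:ℝ)/2) ≤ (1 + ‖x‖ ^ 2) ^ (-(5:ℝ)/2) :=
    Real.rpow_le_rpow_of_nonpos hn0 h1 (by norm_num)
  unfold Phi
  linarith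

lemma gg_nonneg (x : HSp 3) (hx : 0 < x.2) : 0 ≤ gg x := by
  have := qq_pos x hx
  unfold gg
  positivity

lemma B_sub_Ann (S : ℝ) : {y : HSp 3 | 1 < y.2 ∧ rad y < S}
    ⊆ {y : HSp 3 | 1 < rad y ∧ rad y < S} := by
  rintro y ⟨h1, h2⟩
  exact ⟨lt_of_lt_of_le (lt_of_lt_of_le h1 (le_abs_self _)) (abs_snd_le_rad y), h2⟩

end Aux

/-- `∫_{B⁴₊(0,R)} W_{1,0} Z⁰_{1,0} dx = -(π/4)|S²| log R + O(1)` as `R → ∞`,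
with `|S²| = 4π`. -/
theorem integral_W4_Z4_log :
    ∃ C : ℝ, 0 < C ∧ ∀ R : ℝ, 2 ≤ R →
      |(∫ x in {x : HSp 3 | 0 < x.2 ∧ rad x < R}, W4 x * Z4 x)
          + Real.pi / 4 * (4 * Real.pi) * Real.log R| ≤ C := by
  set CP := ∫ x, Phi x with hCP
  set Cp := ∫ y, psi y with hCp
  have hCP0 : 0 ≤ CP := integral_nonneg Phi_nonneg
  have hCp0 : 0 ≤ Cp := integral_nonneg psi_nonneg
  have hlog2 : 0 ≤ Real.pi ^ 2 * Real.log 2 := by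
    have := Real.pi_pos
    have := Real.log_nonneg (by norm_num : (1:ℝ) ≤ 2)
    positivity
  refine ⟨CP + Cp + Real.pi ^ 2 * Real.log 2 + 1, by linarith, fun R hR => ?_⟩
  have hR0 : (0:ℝ) < R := by linarith
  have hIg : IntegrableOn gg {x : HSp 3 | 0 < x.2 ∧ rad x < R} := by
    refine (integrable_Phi.restrict).mono' ?_ ?_
    · exact ((measurable_snd.const_mul 2 |>.add_const 2).div
        ((cont_qq.pow 3).measurable)).aestronglyMeasurable
    · rw [ae_restrict_iff' (measSet_A R)]
      refine ae_of_all _ fun x hx => ?_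
      rw [Real.norm_eq_abs, abs_of_nonneg (gg_nonneg x hx.1)]
      exact gg_le_Phi x hx.1
  have hmuA : volume {x : HSp 3 | 0 < x.2 ∧ rad x < R} ≠ ⊤ := by
    refine ne_of_lt (lt_of_le_of_lt (measure_mono ?_)
      (measure_ball_lt_top (x := (0 : HSp 3)) (r := R)))
    intro y hy
    simp only [Metric.mem_ball, dist_zero_right]
    exact lt_of_le_of_lt (norm_le_rad y) hy.2
  have hIh : IntegrableOn hh {x : HSp 3 | 0 < x.2 ∧ rad x < R} := by
    apply Measure.integrableOn_of_bounded (M := 1) hmuA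
      ((cont_qq.pow 2).measurable.inv.aestronglyMeasurable)
    rw [ae_restrict_iff' (measSet_A R)]
    refine ae_of_all _ fun x hx => ?_
    have h1 := qq_pos x hx.1
    have h2 : (1:ℝ) ≤ qq x ^ 2 := one_le_pow₀ h1.le
    show ‖((qq x) ^ 2)⁻¹‖ ≤ 1
    rw [Real.norm_eq_abs, abs_of_nonneg (by positivity)]
    rw [inv_le_one_iff₀]; right; exact h2
  have hsplit : (∫ x in {x : HSp 3 | 0 < x.2 ∧ rad x < R}, W4 x * Z4 x)
      = (∫ x in {x : HSp 3 | 0 < x.2 ∧ rad x < R}, gg x)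
        - ∫ x in {x : HSp 3 | 0 < x.2 ∧ rad x < R}, hh x := by
    rw [setIntegral_congr_fun (measSet_A R) (fun x hx => W4Z4_eq x hx.1)]
    exact integral_sub hIg hIh
  have hG0 : 0 ≤ ∫ x in {x : HSp 3 | 0 < x.2 ∧ rad x < R}, gg x :=
    setIntegral_nonneg (measSet_A R) fun x hx => gg_nonneg x hx.1
  have hG1 : (∫ x in {x : HSp 3 | 0 < x.2 ∧ rad x < R}, gg x) ≤ CP := by
    refine le_trans (setIntegral_mono_on hIg integrable_Phi.integrableOn (measSet_A R)
      fun x hx => gg_le_Phi x hx.1) ?_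
    exact setIntegral_le_integral integrable_Phi (ae_of_all _ Phi_nonneg)
  have hIOm : IntegrableOn rho {y : HSp 3 | 1 < y.2 ∧ rad (y.1, y.2 - 1) < R} :=
    (integrableOn_rho_Ann (R + 2)).mono_set
      ((Om_subset R hR).trans (B_sub_Ann (R + 2)))
  have hIB2 : IntegrableOn rho {y : HSp 3 | 1 < y.2 ∧ rad y < R + 2} :=
    (integrableOn_rho_Ann (R + 2)).mono_set (B_sub_Ann (R + 2))
  have hlow : (∫ y in {y : HSp 3 | 1 < y.2 ∧ rad y < R}, rho y)
      ≤ ∫ y in {y : HSp 3 | 1 < y.2 ∧ rad (y.1, y.2 - 1) < R}, rho y :=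
    setIntegral_mono_set hIOm (ae_of_all _ rho_nonneg)
      (HasSubset.Subset.eventuallyLE (subset_Om R hR))
  have hup : (∫ y in {y : HSp 3 | 1 < y.2 ∧ rad (y.1, y.2 - 1) < R}, rho y)
      ≤ ∫ y in {y : HSp 3 | 1 < y.2 ∧ rad y < R + 2}, rho y :=
    setIntegral_mono_set hIB2 (ae_of_all _ rho_nonneg)
      (HasSubset.Subset.eventuallyLE (Om_subset R hR))
  obtain ⟨hB1, _⟩ := integral_B_bounds R (by linarith)
  obtain ⟨_, hB2⟩ := integral_B_bounds (R + 2) (by linarith)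
  have hlogR : Real.log (R + 2) ≤ Real.log 2 + Real.log R := by
    rw [← Real.log_mul (by norm_num) (by linarith)]
    exact Real.log_le_log (by linarith) (by linarith)
  have hpi2 : (0:ℝ) ≤ Real.pi ^ 2 := sq_nonneg _
  have hH1 : Real.pi ^ 2 * Real.log R - Cp
      ≤ ∫ x in {x : HSp 3 | 0 < x.2 ∧ rad x < R}, hh x := by
    rw [translate_h R]; linarith
  have hH2 : (∫ x in {x : HSp 3 | 0 < x.2 ∧ rad x < R}, hh x)
      ≤ Real.pi ^ 2 * Real.log R + Real.pi ^ 2 * Real.log 2 := by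
    rw [translate_h R]
    nlinarith
  rw [hsplit, show Real.pi / 4 * (4 * Real.pi) = Real.pi ^ 2 by ring, abs_le]
  constructor <;> linarith
end
end

section
/- Let N = 4 and define Z⁰_{1,0}(x) = (1 − |x̄|² − x₄²)/(|x̄|² + (x₄+1)²)². Let Δ_{x̄} denote the Laplacian with respect to the first three variables x₁, x₂, x₃, so that Δ_{x̄} W_{1,0}(x) = 2(|x̄|² − 3(x₄+1)²)/(|x̄|² + (x₄+1)²)³. Then there exists a constant C > 0 such that for all R ≥ 2: | ∫_{B⁴_+(0,R)} x₄² (Δ_{x̄} W_{1,0})(x) Z⁰_{1,0}(x) dx − (π/8) |S²| log R | ≤ C, where B⁴_+(0,R) = {x ∈ ℝ⁴ : x₄ > 0, |x| < R} and |S²| = 4π. In particular ∫_{B⁴_+(0,R)} x₄² Δ_{x̄} W_{1,0} Z⁰_{1,0} dx = (π/8)|S²| log R + O(1) as R → ∞. -/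
open MeasureTheory Filter Topology

noncomputable section

/-- The horizontal Laplacian of `W_{1,0}` in dimension `N = 4`:
`Δ_{x̄} W_{1,0}(x) = 2(|x̄|² - 3(x₄+1)²)/(|x̄|² + (x₄+1)²)³`. -/
def lapHorizW4 : HSp 3 → ℝ := fun x =>
  2 * (‖x.1‖ ^ 2 - 3 * (x.2 + 1) ^ 2) / (‖x.1‖ ^ 2 + (x.2 + 1) ^ 2) ^ 3

open Set

noncomputable section AuxSection19

namespace Aux19

/-- `f` as a function of `s = ‖x̄‖`, `t = x₄`. -/
def ffn (s t : ℝ) : ℝ :=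
  2 * t^2 * ((s^2 + t^2) - 4*t^2 - 6*t - 3) * (1 - (s^2 + t^2)) / (s^2 + (t+1)^2)^5

/-- The leading homogeneous part. -/
def ggn (s t : ℝ) : ℝ := (-2) * t^2 * ((s^2 + t^2) - 4*t^2) / (s^2 + t^2)^4

set_option maxHeartbeats 2000000 in
theorem key_diff (s t : ℝ) (ht : 0 ≤ t) (hQ : 1 ≤ s^2 + t^2) :
    |ffn s t - ggn s t| ≤ 100000 * (t+1) / (s^2 + t^2)^3 := by
  set Q : ℝ := s^2 + t^2 with hQdef
  have ht2 : t^2 ≤ Q := by nlinarith [sq_nonneg s]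
  have hQ0 : (0:ℝ) < Q := by linarith
  set u : ℝ := 2*t + 1 with hudef
  have hu0 : (0:ℝ) < u := by linarith
  set D : ℝ := Q + u with hDdef
  have hD0 : (0:ℝ) < D := by linarith
  have hQD : Q ≤ D := by linarith
  set A0 : ℝ := Q - 4*t^2 with hA0def
  have hD5 : Q^5 ≤ D^5 := pow_le_pow_left₀ hQ0.le hQD 5
  set P : ℝ := 5*Q^4*u + 10*Q^3*u^2 + 10*Q^2*u^3 + 5*Q*u^4 + u^5 with hPdef
  have hsplit : ffn s t - ggn s t =
      (2*t^2*(A0*Q^4 + 3*u*(Q-1)*Q^4 + A0*P)) / (D^5 * Q^4) := by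
    have hden : s^2 + (t+1)^2 = D := by rw [hDdef, hudef, hQdef]; ring
    rw [ffn, ggn, hden]
    have h1 : D^5 ≠ 0 := by positivity
    have h2 : Q^4 ≠ 0 := by positivity
    rw [hPdef, hA0def, hDdef, hudef, hQdef]
    have h1' : s^2 + t^2 + (2*t+1) ≠ 0 := ne_of_gt (by nlinarith [sq_nonneg s, sq_nonneg t])
    have h2' : s^2 + t^2 ≠ 0 := ne_of_gt (by nlinarith [sq_nonneg s, sq_nonneg t])
    field_simp
    ring
  rw [hsplit]
  have habsA : |A0| ≤ 4*Q := by
    rw [abs_le]; constructor <;> nlinarith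
  have hu1 : u ≤ 2*(t+1) := by simp only [hudef]; linarith
  have hu2 : u^2 ≤ 13*Q := by simp only [hudef]; nlinarith [sq_nonneg (t-1)]
  have hu4 : u^4 ≤ 169*Q^2 := by nlinarith [sq_nonneg u, sq_nonneg (u^2 - 13*Q)]
  have hu3 : u^3 ≤ 26*(t+1)*Q := by
    calc u^3 = u * u^2 := by ring
    _ ≤ (2*(t+1)) * (13*Q) := mul_le_mul hu1 hu2 (by positivity) (by positivity)
    _ = 26*(t+1)*Q := by ring
  have hu5 : u^5 ≤ 338*(t+1)*Q^2 := by
    calc u^5 = u * u^4 := by ring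
    _ ≤ (2*(t+1)) * (169*Q^2) := mul_le_mul hu1 hu4 (by positivity) (by positivity)
    _ = 338*(t+1)*Q^2 := by ring
  have ht1 : (1:ℝ) ≤ t + 1 := by linarith
  have hPpos : 0 ≤ P := by positivity
  have hP : P ≤ 1583*(t+1)*Q^4 := by
    have e1 : 5*Q^4*u ≤ 10*(t+1)*Q^4 := by nlinarith [pow_pos hQ0 4]
    have e2 : 10*Q^3*u^2 ≤ 130*(t+1)*Q^4 := by
      nlinarith [mul_le_mul_of_nonneg_left hu2 (by positivity : (0:ℝ) ≤ 10*Q^3), pow_pos hQ0 4]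
    have e3 : 10*Q^2*u^3 ≤ 260*(t+1)*Q^4 := by
      nlinarith [mul_le_mul_of_nonneg_left hu3 (by positivity : (0:ℝ) ≤ 10*Q^2),
        mul_pos (mul_pos hQ0 hQ0) hQ0, mul_nonneg (mul_nonneg (by linarith : (0:ℝ) ≤ t+1) hQ0.le) (mul_nonneg hQ0.le hQ0.le)]
    have e4 : 5*Q*u^4 ≤ 845*(t+1)*Q^4 := by
      nlinarith [mul_le_mul_of_nonneg_left hu4 (by positivity : (0:ℝ) ≤ 5*Q), pow_pos hQ0 3,
        mul_nonneg (by linarith : (0:ℝ) ≤ t) (pow_pos hQ0 3).le]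
    have e5 : u^5 ≤ 338*(t+1)*Q^4 := by
      nlinarith [hu5, mul_nonneg (mul_nonneg (by norm_num : (0:ℝ) ≤ 338) (by linarith : (0:ℝ) ≤ t+1)) (mul_nonneg hQ0.le hQ0.le), pow_pos hQ0 2,
        mul_le_mul_of_nonneg_left (show Q^2 ≤ Q^4 by nlinarith [pow_pos hQ0 2, sq_nonneg (Q^2 - Q)]) (by positivity : (0:ℝ) ≤ 338*(t+1))]
    linarith
  have hT1 : |A0*Q^4| ≤ 4*Q^5 := by
    rw [abs_mul, abs_of_nonneg (by positivity : (0:ℝ) ≤ Q^4)]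
    calc |A0| * Q^4 ≤ (4*Q) * Q^4 :=
          mul_le_mul_of_nonneg_right habsA (by positivity)
    _ = 4*Q^5 := by ring
  have hT2 : |3*u*(Q-1)*Q^4| ≤ 6*(t+1)*Q^5 := by
    have hQ1 : (0:ℝ) ≤ Q - 1 := by linarith
    have h1 : (0:ℝ) ≤ 3*u*(Q-1)*Q^4 := by positivity
    rw [abs_of_nonneg h1]
    have h2 : u*(Q-1) ≤ (2*(t+1))*Q :=
      mul_le_mul hu1 (by linarith) hQ1 (by positivity)
    nlinarith [mul_le_mul_of_nonneg_right h2 (by positivity : (0:ℝ) ≤ 3*Q^4)]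
  have hT3 : |A0*P| ≤ 6332*(t+1)*Q^5 := by
    rw [abs_mul, abs_of_nonneg hPpos]
    calc |A0| * P ≤ (4*Q) * (1583*(t+1)*Q^4) := by
          apply mul_le_mul habsA hP hPpos (by positivity)
    _ = 6332*(t+1)*Q^5 := by ring
  have hNum : |2*t^2*(A0*Q^4 + 3*u*(Q-1)*Q^4 + A0*P)| ≤ 12684*(t+1)*Q^6 := by
    rw [abs_mul, abs_of_nonneg (by positivity : (0:ℝ) ≤ 2*t^2)]
    have habs : |A0*Q^4 + 3*u*(Q-1)*Q^4 + A0*P| ≤ 4*Q^5 + 6*(t+1)*Q^5 + 6332*(t+1)*Q^5 := by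
      calc |A0*Q^4 + 3*u*(Q-1)*Q^4 + A0*P| ≤ |A0*Q^4 + 3*u*(Q-1)*Q^4| + |A0*P| := abs_add_le _ _
      _ ≤ (|A0*Q^4| + |3*u*(Q-1)*Q^4|) + |A0*P| := by gcongr; exact abs_add_le _ _
      _ ≤ 4*Q^5 + 6*(t+1)*Q^5 + 6332*(t+1)*Q^5 := by linarith
    calc 2*t^2 * |A0*Q^4 + 3*u*(Q-1)*Q^4 + A0*P|
        ≤ (2*Q) * (4*Q^5 + 6*(t+1)*Q^5 + 6332*(t+1)*Q^5) := by
          apply mul_le_mul (by linarith) habs (abs_nonneg _) (by positivity)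
    _ ≤ (2*Q) * (6342*(t+1)*Q^5) := by nlinarith [pow_pos hQ0 5, mul_pos hQ0 (pow_pos hQ0 5)]
    _ = 12684*(t+1)*Q^6 := by ring
  rw [abs_div, abs_of_nonneg (by positivity : (0:ℝ) ≤ D^5 * Q^4),
    div_le_div_iff₀ (by positivity) (by positivity)]
  calc |2*t^2*(A0*Q^4 + 3*u*(Q-1)*Q^4 + A0*P)| * Q^3
      ≤ (12684*(t+1)*Q^6) * Q^3 := mul_le_mul_of_nonneg_right hNum (by positivity)
  _ = (12684*(t+1)*Q^4) * Q^5 := by ring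
  _ ≤ (12684*(t+1)*Q^4) * D^5 := mul_le_mul_of_nonneg_left hD5 (by positivity)
  _ ≤ 100000*(t+1) * (D^5 * Q^4) := by nlinarith [mul_pos (pow_pos hD0 5) (pow_pos hQ0 4)]



/-- the angular profile -/
def phiAng (θ : ℝ) : ℝ := -2*(Real.cos θ)^2*(Real.sin θ)^2 + 8*(Real.cos θ)^2*(Real.sin θ)^4

lemma phiAng_cont : Continuous phiAng := by unfold phiAng; fun_prop

def HAng (θ : ℝ) : ℝ := θ/4 - Real.sin (2*θ)/8 - Real.sin (4*θ)/16 + Real.sin (6*θ)/24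

lemma hasDerivAt_HAng (θ : ℝ) : HasDerivAt HAng (phiAng θ) θ := by
  have h1 : ∀ c : ℝ, HasDerivAt (fun x : ℝ => Real.sin (c*x)) (Real.cos (c*θ) * c) θ := by
    intro c
    simpa using ((hasDerivAt_id θ).const_mul c).sin
  have h := ((((hasDerivAt_id θ).div_const 4).sub ((h1 2).div_const 8)).sub
      ((h1 4).div_const 16)).add ((h1 6).div_const 24)
  refine h.congr_deriv ?_
  symm
  have e4 : (4:ℝ)*θ = 2*(2*θ) := by ring
  have e6 : (6:ℝ)*θ = 3*(2*θ) := by ring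
  rw [phiAng, e4, e6, Real.cos_two_mul (2*θ), Real.cos_three_mul (2*θ), Real.cos_two_mul θ]
  linear_combination (8*Real.cos θ^2*(Real.sin θ^2 + 1 - Real.cos θ^2) -
    2*Real.cos θ^2) * Real.sin_sq_add_cos_sq θ

lemma angular_int : ∫ θ in Ioo (0:ℝ) (Real.pi/2), phiAng θ = Real.pi/8 := by
  have hpi := Real.pi_pos
  rw [← integral_Ioc_eq_integral_Ioo, ← intervalIntegral.integral_of_le (by positivity)]
  rw [intervalIntegral.integral_eq_sub_of_hasDerivAt (fun x _ => hasDerivAt_HAng x)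
    (phiAng_cont.intervalIntegrable _ _)]
  have h2 : 2*(Real.pi/2) = Real.pi := by ring
  have h4 : 4*(Real.pi/2) = 2*Real.pi := by ring
  have h6 : 6*(Real.pi/2) = 2*Real.pi + Real.pi := by ring
  rw [HAng, HAng, h2, h4, h6, Real.sin_pi, Real.sin_two_pi, Real.sin_add, Real.sin_two_pi,
    Real.cos_two_pi, Real.sin_pi]
  simp
  ring


lemma radial_int {R : ℝ} (hR : 1 ≤ R) : ∫ r in Ico (1:ℝ) R, r⁻¹ = Real.log R := by
  rw [integral_Ico_eq_integral_Ioo, ← integral_Ioc_eq_integral_Ioo,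
    ← intervalIntegral.integral_of_le hR,
    integral_inv (by rw [uIcc_of_le hR]; rintro ⟨h0, -⟩; linarith)]
  simp


abbrev E3 := EuclideanSpace ℝ (Fin 3)

lemma gamma_52 : Real.Gamma ((3:ℝ)/2 + 1) = 3/4 * Real.sqrt Real.pi := by
  rw [Real.Gamma_add_one (by norm_num)]
  have h : (3:ℝ)/2 = 1/2 + 1 := by norm_num
  rw [h, Real.Gamma_add_one (by norm_num), Real.Gamma_one_half_eq]
  ring

lemma vol_ball3 : (volume (Metric.ball (0 : E3) 1)).toReal = 4/3 * Real.pi := by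
  have hpi := Real.pi_pos
  have hs0 : (0:ℝ) < Real.sqrt Real.pi := Real.sqrt_pos.mpr hpi
  rw [EuclideanSpace.volume_ball]
  have hcard : (Fintype.card (Fin 3)) = 3 := by simp
  rw [hcard]
  have hval : Real.sqrt Real.pi ^ (3:ℕ) / Real.Gamma ((3:ℕ)/2 + 1) = 4/3 * Real.pi := by
    push_cast
    rw [gamma_52]
    have hsq : Real.sqrt Real.pi ^ (3:ℕ) = Real.pi * Real.sqrt Real.pi := by
      rw [pow_succ, Real.sq_sqrt hpi.le]
    rw [hsq]
    field_simp
  rw [hval]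
  simp [ENNReal.toReal_ofReal (by positivity : (0:ℝ) ≤ 4/3*Real.pi)]

lemma radial3 (f : ℝ → ℝ) :
    ∫ y : E3, f ‖y‖ = (4*Real.pi) * ∫ s in Ioi (0:ℝ), s^2 * f s := by
  rw [MeasureTheory.integral_fun_norm_addHaar (volume : Measure E3) f]
  have hdim : Module.finrank ℝ E3 = 3 := by simp
  rw [hdim, measureReal_def, vol_ball3]
  simp only [smul_eq_mul, nsmul_eq_mul]
  have h2 : ∫ (a : ℝ) in Ioi 0, a ^ (3-1) * f a = ∫ s in Ioi (0:ℝ), s^2 * f s := by norm_num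
  rw [h2]
  push_cast
  ring



def fG (x : HSp 3) : ℝ := if 1 ≤ ‖x.1‖^2 + x.2^2 then ggn ‖x.1‖ x.2 else 0
def SS (R : ℝ) : Set (HSp 3) := {x | 0 < x.2 ∧ ‖x.1‖^2 + x.2^2 < R^2}
def FP (R s t : ℝ) : ℝ := if 0 < t ∧ 1 ≤ s^2+t^2 ∧ s^2+t^2 < R^2 then ggn s t else 0
def KP (R : ℝ) (p : ℝ×ℝ) : ℝ := if 0 < p.1 then p.1^2 * FP R p.1 p.2 else 0

lemma ggn_abs_le {s t : ℝ} (h : 1 ≤ s^2 + t^2) : |ggn s t| ≤ 8 := by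
  have hQ0 : (0:ℝ) < s^2 + t^2 := by linarith
  have ht2 : t^2 ≤ s^2+t^2 := by nlinarith [sq_nonneg s]
  rw [ggn, abs_div, abs_of_nonneg (by positivity : (0:ℝ) ≤ (s^2+t^2)^4),
    div_le_iff₀ (by positivity)]
  have h1 : |(-2) * t^2 * ((s^2 + t^2) - 4*t^2)| ≤ 2*(s^2+t^2) * (4*(s^2+t^2)) := by
    rw [abs_mul]
    apply mul_le_mul
    · rw [abs_mul]; simp only [abs_neg, abs_two, abs_of_nonneg (sq_nonneg t)]; nlinarith
    · rw [abs_le]; constructor <;> nlinarith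
    · exact abs_nonneg _
    · positivity
  calc |(-2) * t^2 * ((s^2 + t^2) - 4*t^2)| ≤ 2*(s^2+t^2) * (4*(s^2+t^2)) := h1
  _ = 8 * (s^2+t^2)^2 := by ring
  _ ≤ 8 * (s^2+t^2)^4 := by nlinarith [sq_nonneg ((s^2+t^2)^2 - (s^2+t^2)), sq_nonneg (s^2+t^2)]

lemma ggn_meas : Measurable (fun p : ℝ × ℝ => ggn p.1 p.2) := by
  apply Measurable.div <;> fun_prop

lemma sumsq_meas : Measurable (fun p : ℝ × ℝ => p.1^2 + p.2^2) :=
  (measurable_fst.pow_const 2).add (measurable_snd.pow_const 2)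

lemma FP_meas (R : ℝ) : Measurable (fun p : ℝ × ℝ => FP R p.1 p.2) := by
  unfold FP
  apply Measurable.ite _ ggn_meas measurable_const
  apply MeasurableSet.inter
  · exact measurableSet_lt measurable_const measurable_snd
  apply MeasurableSet.inter
  · exact measurableSet_le measurable_const sumsq_meas
  · exact measurableSet_lt sumsq_meas measurable_const

lemma FPcomp_meas (R : ℝ) : Measurable (fun x : HSp 3 => FP R ‖x.1‖ x.2) := by
  have : (fun x : HSp 3 => FP R ‖x.1‖ x.2)
      = (fun p : ℝ × ℝ => FP R p.1 p.2) ∘ (fun x : HSp 3 => (‖x.1‖, x.2)) := rfl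
  rw [this]
  exact (FP_meas R).comp (by fun_prop)

lemma norm_le_of_sq (x : HSp 3) : ‖x‖ ≤ Real.sqrt (‖x.1‖^2 + x.2^2) := by
  have h1 := Real.sqrt_le_sqrt (show ‖x.1‖^2 ≤ ‖x.1‖^2+x.2^2 by nlinarith [sq_nonneg x.2])
  rw [Real.sqrt_sq (norm_nonneg _)] at h1
  have h2 := Real.sqrt_le_sqrt (show x.2^2 ≤ ‖x.1‖^2+x.2^2 by nlinarith [sq_nonneg ‖x.1‖])
  rw [Real.sqrt_sq_eq_abs] at h2
  rw [Prod.norm_def]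
  exact max_le h1 h2

lemma FPcomp_int {R : ℝ} (hR : 1 ≤ R) :
    Integrable (fun x : HSp 3 => FP R ‖x.1‖ x.2) := by
  have hR0 : (0:ℝ) < R := by linarith
  have hmaj : Integrable ((Metric.ball (0:HSp 3) R).indicator (fun _ => (8:ℝ))) :=
    (integrable_indicator_iff Metric.isOpen_ball.measurableSet).mpr
      (integrableOn_const measure_ball_lt_top.ne)
  apply Integrable.mono' hmaj (FPcomp_meas R).aestronglyMeasurable
  refine ae_of_all _ fun x => ?_
  by_cases h : 0 < x.2 ∧ 1 ≤ ‖x.1‖^2+x.2^2 ∧ ‖x.1‖^2+x.2^2 < R^2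
  · have hx : x ∈ Metric.ball (0 : HSp 3) R := by
      rw [Metric.mem_ball, dist_zero_right]
      calc ‖x‖ ≤ Real.sqrt (‖x.1‖^2 + x.2^2) := norm_le_of_sq x
      _ < R := by rw [Real.sqrt_lt' hR0]; exact h.2.2
    rw [Set.indicator_of_mem hx]
    simp only [FP, if_pos h, Real.norm_eq_abs]
    exact ggn_abs_le h.2.1
  · simp only [FP, if_neg h, Real.norm_eq_abs, abs_zero]
    exact Set.indicator_apply_nonneg (fun _ => by norm_num)

lemma KP_meas (R : ℝ) : Measurable (KP R) := by
  unfold KP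
  apply Measurable.ite
  · exact measurableSet_lt measurable_const measurable_fst
  · exact ((measurable_fst.pow_const 2)).mul (FP_meas R)
  · exact measurable_const

lemma KP_int {R : ℝ} (hR : 1 ≤ R) : Integrable (KP R) := by
  have hR0 : (0:ℝ) < R := by linarith
  have hmaj : Integrable ((Metric.ball (0:ℝ×ℝ) R).indicator (fun _ => 8*R^2)) :=
    (integrable_indicator_iff Metric.isOpen_ball.measurableSet).mpr
      (integrableOn_const measure_ball_lt_top.ne)
  apply Integrable.mono' hmaj (KP_meas R).aestronglyMeasurable
  refine ae_of_all _ fun p => ?_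
  by_cases h1 : 0 < p.1
  swap
  · simp only [KP, if_neg h1, Real.norm_eq_abs, abs_zero]
    exact Set.indicator_apply_nonneg (fun _ => by positivity)
  by_cases h : 0 < p.2 ∧ 1 ≤ p.1^2+p.2^2 ∧ p.1^2+p.2^2 < R^2
  · have hx : p ∈ Metric.ball (0 : ℝ×ℝ) R := by
      rw [Metric.mem_ball, dist_zero_right, Prod.norm_def]
      have e1 : ‖p.1‖ < R := by
        rw [Real.norm_eq_abs, ← Real.sqrt_sq_eq_abs]
        rw [show R = Real.sqrt (R^2) by rw [Real.sqrt_sq hR0.le]]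
        apply Real.sqrt_lt_sqrt (sq_nonneg _); nlinarith [sq_nonneg p.2]
      have e2 : ‖p.2‖ < R := by
        rw [Real.norm_eq_abs, ← Real.sqrt_sq_eq_abs]
        rw [show R = Real.sqrt (R^2) by rw [Real.sqrt_sq hR0.le]]
        apply Real.sqrt_lt_sqrt (sq_nonneg _); nlinarith [sq_nonneg p.1]
      exact max_lt e1 e2
    rw [Set.indicator_of_mem hx]
    simp only [KP, if_pos h1, FP, if_pos h, Real.norm_eq_abs, abs_mul]
    rw [abs_of_nonneg (sq_nonneg p.1)]
    have := ggn_abs_le h.2.1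
    have hp1 : p.1^2 ≤ R^2 := by nlinarith [sq_nonneg p.2]
    calc p.1^2 * |ggn p.1 p.2| ≤ R^2 * 8 :=
          mul_le_mul hp1 this (abs_nonneg _) (sq_nonneg R)
    _ = 8 * R^2 := by ring
  · simp only [KP, if_pos h1, FP, if_neg h, Real.norm_eq_abs, mul_zero, abs_zero]
    exact Set.indicator_apply_nonneg (fun _ => by positivity)



lemma polarCoord_symm_eq (p : ℝ × ℝ) :
    polarCoord.symm p = (p.1 * Real.cos p.2, p.1 * Real.sin p.2) := rfl

lemma polarCoord_target_eq : polarCoord.target = Ioi (0:ℝ) ×ˢ Ioo (-Real.pi) Real.pi := rfl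

lemma polar_integrand_int {R : ℝ} (hR : 1 ≤ R) :
    IntegrableOn (fun p : ℝ×ℝ => p.1 • KP R (polarCoord.symm p))
      (Ioi (0:ℝ) ×ˢ Ioo (-Real.pi) Real.pi) := by
  have hR0 : (0:ℝ) < R := by linarith
  have hpair : Measurable (fun p : ℝ×ℝ => (p.1 * Real.cos p.2, p.1 * Real.sin p.2)) := by
    fun_prop
  have hmeas : Measurable (fun p : ℝ×ℝ => p.1 • KP R (polarCoord.symm p)) := by
    simp only [smul_eq_mul]
    exact measurable_fst.mul ((KP_meas R).comp hpair)
  have hmaj : Integrable ((Metric.ball (0:ℝ×ℝ) (R+4)).indicator (fun _ => 8*R^3)) :=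
    (integrable_indicator_iff Metric.isOpen_ball.measurableSet).mpr
      (integrableOn_const measure_ball_lt_top.ne)
  have hset : MeasurableSet (Ioi (0:ℝ) ×ˢ Ioo (-Real.pi) Real.pi) :=
    measurableSet_Ioi.prod measurableSet_Ioo
  apply Integrable.mono' hmaj.restrict hmeas.aestronglyMeasurable
  rw [ae_restrict_iff' hset]
  refine ae_of_all _ fun p hp => ?_
  obtain ⟨hp1, hp2⟩ := hp
  have hp1' : (0:ℝ) < p.1 := hp1
  rw [polarCoord_symm_eq]
  by_cases h1 : 0 < p.1 * Real.cos p.2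
  swap
  · simp only [KP]
    rw [if_neg h1, smul_zero, norm_zero]
    exact Set.indicator_apply_nonneg fun _ => by positivity
  by_cases h2 : 0 < p.1 * Real.sin p.2 ∧ 1 ≤ (p.1 * Real.cos p.2)^2 + (p.1 * Real.sin p.2)^2
      ∧ (p.1 * Real.cos p.2)^2 + (p.1 * Real.sin p.2)^2 < R^2
  swap
  · simp only [KP, FP]
    rw [if_pos h1, if_neg h2, mul_zero, smul_zero, norm_zero]
    exact Set.indicator_apply_nonneg fun _ => by positivity
  have hq : (p.1 * Real.cos p.2)^2 + (p.1 * Real.sin p.2)^2 = p.1^2 := by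
    nlinarith [Real.sin_sq_add_cos_sq p.2]
  have hlt : p.1 < R := by nlinarith [h2.2.2, hq]
  have hin : p ∈ Metric.ball (0:ℝ×ℝ) (R+4) := by
    rw [Metric.mem_ball, dist_zero_right, Prod.norm_def]
    apply max_lt
    · rw [Real.norm_eq_abs, abs_of_pos hp1']; linarith
    · rw [Real.norm_eq_abs]
      have h4 := Real.pi_le_four
      rw [abs_lt]
      constructor
      · have := hp2.1; simp only [mem_Ioo] at hp2; linarith [hp2.1]
      · simp only [mem_Ioo] at hp2; linarith [hp2.2]
  rw [Set.indicator_of_mem hin]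
  simp only [KP, FP]
  rw [if_pos h1, if_pos h2, smul_eq_mul, Real.norm_eq_abs, abs_mul, abs_mul,
    abs_of_pos hp1', abs_of_nonneg (sq_nonneg _)]
  have hg := ggn_abs_le h2.2.1
  have hcle : (p.1 * Real.cos p.2)^2 ≤ R^2 := by nlinarith [sq_nonneg (p.1 * Real.sin p.2), h2.2.2]
  calc p.1 * ((p.1 * Real.cos p.2)^2 * |ggn (p.1 * Real.cos p.2) (p.1 * Real.sin p.2)|)
      ≤ R * (R^2 * 8) := by
        apply mul_le_mul hlt.le (mul_le_mul hcle hg (abs_nonneg _) (sq_nonneg R))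
          (by positivity) hR0.le
  _ = 8*R^3 := by ring

lemma cc1 {R r θ : ℝ} (hr : 0 < r) (hθ : θ ∈ Ioo (-Real.pi) Real.pi) :
    r • KP R (r * Real.cos θ, r * Real.sin θ)
      = (if 1 ≤ r^2 ∧ r^2 < R^2 then r⁻¹ else 0)
          * (Ioo (0:ℝ) (Real.pi/2)).indicator phiAng θ := by
  have hsc : (r*Real.cos θ)^2 + (r*Real.sin θ)^2 = r^2 := by
    nlinarith [Real.sin_sq_add_cos_sq θ]
  simp only [mem_Ioo] at hθ
  by_cases hrR : 1 ≤ r^2 ∧ r^2 < R^2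
  · rw [if_pos hrR]
    by_cases hθ2 : θ ∈ Ioo (0:ℝ) (Real.pi/2)
    · have hpi := Real.pi_pos
      obtain ⟨hθa, hθb⟩ := hθ2
      have hcos : 0 < Real.cos θ := Real.cos_pos_of_mem_Ioo ⟨by linarith, hθb⟩
      have hsin : 0 < Real.sin θ := Real.sin_pos_of_pos_of_lt_pi hθa (by linarith)
      rw [Set.indicator_of_mem (by exact ⟨hθa, hθb⟩) phiAng]
      simp only [KP, FP]
      rw [if_pos (mul_pos hr hcos), if_pos ⟨mul_pos hr hsin,
        by rw [hsc]; exact hrR.1, by rw [hsc]; exact hrR.2⟩]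
      rw [ggn, hsc, smul_eq_mul, phiAng]
      field_simp
      ring
    · rw [Set.indicator_of_notMem hθ2, mul_zero]
      have hpos : ¬(0 < Real.cos θ ∧ 0 < Real.sin θ) := by
        rintro ⟨hc, hs⟩
        apply hθ2
        have h0 : 0 < θ := by
          by_contra hle
          push_neg at hle
          have := Real.sin_nonpos_of_nonpos_of_neg_pi_le hle hθ.1.le
          linarith
        refine ⟨h0, ?_⟩
        by_contra hle
        push_neg at hle
        have := Real.cos_nonpos_of_pi_div_two_le_of_le hle (by linarith [Real.pi_pos])
        linarith
      rcases not_and_or.mp hpos with hc | hs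
      · push_neg at hc
        have hnc : ¬ (0 < r * Real.cos θ) := not_lt.mpr (by nlinarith)
        simp only [KP]
        rw [if_neg hnc, smul_zero]
      · push_neg at hs
        have hns : ¬ (0 < r * Real.sin θ) := not_lt.mpr (by nlinarith)
        simp only [KP, FP]
        split_ifs with h1 h2
        · exact absurd h2.1 hns
        · rw [mul_zero, smul_zero]
        · rw [smul_zero]
  · rw [if_neg hrR, zero_mul]
    simp only [KP, FP]
    split_ifs with h1 h2
    · exact absurd ⟨by rw [← hsc]; exact h2.2.1, by rw [← hsc]; exact h2.2.2⟩ hrR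
    · rw [mul_zero, smul_zero]
    · rw [smul_zero]

lemma cc2 {R r : ℝ} (hr : r ∈ Ioi (0:ℝ)) :
    (∫ θ in Ioo (-Real.pi) Real.pi, r • KP R (r * Real.cos θ, r * Real.sin θ))
      = (if 1 ≤ r^2 ∧ r^2 < R^2 then r⁻¹ else 0) * (Real.pi/8) := by
  have hpi := Real.pi_pos
  rw [setIntegral_congr_fun measurableSet_Ioo (fun θ hθ => cc1 hr hθ)]
  rw [integral_const_mul]
  congr 1
  rw [setIntegral_indicator measurableSet_Ioo]
  have hsub : Ioo (0:ℝ) (Real.pi/2) ⊆ Ioo (-Real.pi) Real.pi :=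
    Ioo_subset_Ioo (by linarith) (by linarith)
  rw [Set.inter_eq_self_of_subset_right hsub]
  exact angular_int

lemma cc3 {R : ℝ} (hR : 1 ≤ R) :
    ∫ r in Ioi (0:ℝ), (if 1 ≤ r^2 ∧ r^2 < R^2 then r⁻¹ else 0) * (Real.pi/8)
      = Real.pi/8 * Real.log R := by
  have hR0 : (0:ℝ) < R := by linarith
  rw [integral_mul_const]
  have e : EqOn (fun r : ℝ => if 1 ≤ r^2 ∧ r^2 < R^2 then r⁻¹ else 0)
      ((Ico (1:ℝ) R).indicator fun r => r⁻¹) (Ioi 0) := by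
    intro r hr
    have hr0 : (0:ℝ) < r := hr
    simp only [Set.indicator_apply, mem_Ico]
    by_cases h : 1 ≤ r ∧ r < R
    · rw [if_pos ⟨by nlinarith [h.1], by nlinarith [h.2]⟩, if_pos h]
    · rw [if_neg ?_, if_neg h]
      rintro ⟨ha, hb⟩
      exact h ⟨by nlinarith, by nlinarith⟩
  rw [setIntegral_congr_fun measurableSet_Ioi e]
  rw [setIntegral_indicator measurableSet_Ico]
  have hsub : Ico (1:ℝ) R ⊆ Ioi 0 := fun x hx => lt_of_lt_of_le zero_lt_one hx.1
  rw [Set.inter_eq_self_of_subset_right hsub]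
  rw [radial_int hR]
  ring




lemma hq3meas : Measurable (fun x : HSp 3 => ‖x.1‖^2 + x.2^2) :=
  (measurable_fst.norm.pow_const 2).add (measurable_snd.pow_const 2)

lemma SS_meas (R : ℝ) : MeasurableSet (SS R) := by
  have hE : SS R = {x : HSp 3 | 0 < x.2} ∩ {x : HSp 3 | ‖x.1‖^2 + x.2^2 < R^2} := rfl
  rw [hE]
  exact (measurableSet_lt measurable_const measurable_snd).inter
    (measurableSet_lt hq3meas measurable_const)


lemma lemA {R : ℝ} (hR : 1 ≤ R) :
    ∫ x in SS R, fG x = Real.pi/8 * (4*Real.pi) * Real.log R := by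
  have hSmeas : MeasurableSet (SS R) := SS_meas R
  have h0 : ∫ x in SS R, fG x = ∫ x : HSp 3, FP R ‖x.1‖ x.2 := by
    rw [← integral_indicator hSmeas]
    apply integral_congr_ae (ae_of_all _ fun x => ?_)
    simp only [Set.indicator_apply, SS, mem_setOf_eq, fG, FP]
    by_cases h1 : 0 < x.2 <;> by_cases h2 : 1 ≤ ‖x.1‖^2 + x.2^2 <;>
      by_cases h3 : ‖x.1‖^2 + x.2^2 < R^2 <;> simp [h1, h2, h3]
  have e1 : ∀ s ∈ Ioi (0:ℝ), s^2 * (∫ t, FP R s t) = ∫ t, KP R (s, t) := by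
    intro s hs
    rw [← integral_const_mul]
    refine integral_congr_ae (ae_of_all _ fun t => ?_)
    show s^2 * FP R s t = KP R (s, t)
    have hKP : KP R (s, t) = if 0 < s then s^2 * FP R s t else 0 := rfl
    rw [hKP, if_pos (mem_Ioi.mp hs)]
  have hzero : ∀ s ∉ Ioi (0:ℝ), (∫ t, KP R (s, t)) = 0 := by
    intro s hs
    have h : ∀ t : ℝ, KP R (s, t) = 0 := by
      intro t
      have hKP : KP R (s, t) = if 0 < s then s^2 * FP R s t else 0 := rfl
      rw [hKP, if_neg (by simpa using hs)]
    simp only [h, integral_zero]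
  have e3 : (∫ p : ℝ×ℝ, KP R p) = Real.pi/8 * Real.log R := by
    rw [← integral_comp_polarCoord_symm (KP R), polarCoord_target_eq,
      Measure.volume_eq_prod,
      setIntegral_prod _ (by rw [← Measure.volume_eq_prod]; exact polar_integrand_int hR)]
    show (∫ r in Ioi (0:ℝ), ∫ θ in Ioo (-Real.pi) Real.pi,
        r • KP R (r * Real.cos θ, r * Real.sin θ)) = _
    rw [setIntegral_congr_fun measurableSet_Ioi (fun r hr => cc2 (R := R) hr)]
    exact cc3 hR
  have e2 : (∫ s in Ioi (0:ℝ), s^2 * ∫ t, FP R s t) = Real.pi/8 * Real.log R := by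
    rw [setIntegral_congr_fun measurableSet_Ioi e1,
      setIntegral_eq_integral_of_forall_compl_eq_zero hzero]
    have hpr := integral_prod (μ := (volume : Measure ℝ)) (ν := (volume : Measure ℝ)) (KP R)
      (by rw [← Measure.volume_eq_prod]; exact KP_int hR)
    rw [← hpr, ← Measure.volume_eq_prod]
    exact e3
  rw [h0, Measure.volume_eq_prod,
    integral_prod _ (by rw [← Measure.volume_eq_prod]; exact FPcomp_int hR)]
  show (∫ y : E3, ∫ t : ℝ, FP R ‖y‖ t) = _
  rw [radial3 (fun s => ∫ t, FP R s t), e2]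
  ring



lemma f0_eq (x : HSp 3) (ht : 0 ≤ x.2) :
    x.2^2 * lapHorizW4 x * Z4 x = ffn ‖x.1‖ x.2 := by
  have hD : (0:ℝ) < ‖x.1‖^2 + (x.2+1)^2 := by nlinarith [sq_nonneg ‖x.1‖]
  simp only [lapHorizW4, Z4, ffn]
  field_simp
  ring

lemma ffn_small {s t : ℝ} (ht : 0 ≤ t) (h : s^2+t^2 ≤ 1) : |ffn s t| ≤ 26 := by
  have hs0 : (0:ℝ) ≤ s^2 := sq_nonneg s
  have hD1 : (1:ℝ) ≤ s^2+(t+1)^2 := by nlinarith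
  have hD0 : (0:ℝ) < s^2+(t+1)^2 := by linarith
  have ht1 : t ≤ 1 := by nlinarith [sq_nonneg (t-1)]
  rw [ffn, abs_div, abs_of_nonneg (by positivity : (0:ℝ) ≤ (s^2+(t+1)^2)^5),
    div_le_iff₀ (by positivity)]
  have e1 : |2*t^2| ≤ 2 := by rw [abs_of_nonneg (by positivity)]; nlinarith
  have e2 : |(s^2+t^2) - 4*t^2 - 6*t - 3| ≤ 13 := by
    rw [abs_le]; constructor <;> nlinarith
  have e3 : |1 - (s^2+t^2)| ≤ 1 := by
    rw [abs_le]; constructor <;> nlinarith [sq_nonneg t]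
  have hnum : |2*t^2*((s^2+t^2) - 4*t^2 - 6*t - 3)*(1 - (s^2+t^2))| ≤ 26 := by
    rw [abs_mul, abs_mul]
    calc |2*t^2| * |(s^2+t^2) - 4*t^2 - 6*t - 3| * |1 - (s^2+t^2)|
        ≤ 2*13*1 := by
          apply mul_le_mul (mul_le_mul e1 e2 (abs_nonneg _) (by norm_num)) e3
            (abs_nonneg _) (by positivity)
    _ = 26 := by norm_num
  have hpow : (1:ℝ) ≤ (s^2+(t+1)^2)^5 := one_le_pow₀ hD1
  nlinarith

lemma hh_bound (x : HSp 3) (hx : 0 < x.2) :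
    |x.2^2 * lapHorizW4 x * Z4 x - fG x| ≤ 10000000 * ((1+‖x‖)^5)⁻¹ := by
  have hs0 : (0:ℝ) ≤ ‖x.1‖ := norm_nonneg _
  have ht0 : (0:ℝ) ≤ x.2 := hx.le
  have hq0 : (0:ℝ) ≤ ‖x.1‖^2+x.2^2 := by positivity
  have hxn : ‖x‖ ≤ Real.sqrt (‖x.1‖^2+x.2^2) := norm_le_of_sq x
  have hx0 : (0:ℝ) ≤ ‖x‖ := norm_nonneg _
  rw [f0_eq x ht0]
  by_cases h : 1 ≤ ‖x.1‖^2 + x.2^2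
  · simp only [fG]
    rw [if_pos h]
    have hkey := key_diff ‖x.1‖ x.2 ht0 h
    set r := Real.sqrt (‖x.1‖^2+x.2^2) with hrdef
    have hr2 : r^2 = ‖x.1‖^2+x.2^2 := Real.sq_sqrt hq0
    have hr1 : (1:ℝ) ≤ r := by
      rw [show (1:ℝ) = Real.sqrt 1 by rw [Real.sqrt_one], hrdef]
      exact Real.sqrt_le_sqrt h
    have hr0 : (0:ℝ) < r := by linarith
    have htr : x.2 ≤ r := Real.le_sqrt_of_sq_le (by nlinarith)
    refine hkey.trans ?_
    have hq3 : (‖x.1‖^2+x.2^2)^3 = r^6 := by rw [← hr2]; ring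
    rw [hq3]
    have h1x : (1+‖x‖)^5 ≤ 32*r^5 := by
      calc (1+‖x‖)^5 ≤ (2*r)^5 := pow_le_pow_left₀ (by positivity) (by linarith) 5
      _ = 32*r^5 := by ring
    have e1 : 100000*(x.2+1)/r^6 ≤ 200000 / r^5 := by
      rw [div_le_div_iff₀ (by positivity) (by positivity)]
      have h2r : x.2+1 ≤ 2*r := by linarith
      nlinarith [pow_pos hr0 5]
    refine e1.trans ?_
    rw [← div_eq_mul_inv, div_le_div_iff₀ (by positivity) (by positivity)]
    nlinarith [pow_pos hr0 5, mul_le_mul_of_nonneg_left h1x (by norm_num : (0:ℝ) ≤ 200000)]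
  · push_neg at h
    simp only [fG]
    rw [if_neg (not_le.mpr h), sub_zero]
    have hb : |ffn ‖x.1‖ x.2| ≤ 26 := ffn_small ht0 h.le
    have hx1 : ‖x‖ ≤ 1 := by
      refine hxn.trans ?_
      rw [show (1:ℝ) = Real.sqrt 1 by rw [Real.sqrt_one]]
      exact Real.sqrt_le_sqrt h.le
    have h32 : (1+‖x‖)^5 ≤ 32 := by
      calc (1+‖x‖)^5 ≤ 2^5 := pow_le_pow_left₀ (by positivity) (by linarith) 5
      _ = 32 := by norm_num
    have h320 : (0:ℝ) < (1+‖x‖)^5 := by positivity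
    have : (10000000:ℝ)/32 ≤ 10000000 * ((1+‖x‖)^5)⁻¹ := by
      rw [← div_eq_mul_inv, div_le_div_iff₀ (by norm_num) h320]
      nlinarith
    linarith

lemma f0_meas : Measurable (fun x : HSp 3 => x.2^2 * lapHorizW4 x * Z4 x) := by
  simp only [lapHorizW4, Z4]
  apply Measurable.mul
  apply Measurable.mul
  · exact measurable_snd.pow_const 2
  · exact Measurable.div (by fun_prop) (by fun_prop)
  · exact Measurable.div (by fun_prop) (by fun_prop)

lemma fG_meas : Measurable fG := by
  unfold fG
  apply Measurable.ite (measurableSet_le measurable_const hq3meas) _ measurable_const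
  have : (fun x : HSp 3 => ggn ‖x.1‖ x.2)
      = (fun p : ℝ × ℝ => ggn p.1 p.2) ∘ (fun x : HSp 3 => (‖x.1‖, x.2)) := rfl
  rw [this]
  exact ggn_meas.comp (by fun_prop)

instance : (volume : Measure (HSp 3)).IsAddHaarMeasure :=
  (Measure.volume_eq_prod E3 ℝ) ▸ Measure.prod.instIsAddHaarMeasure _ _

lemma MM_int : Integrable (fun x : HSp 3 => 10000000 * ((1+‖x‖)^5)⁻¹) := by
  have h45 : (Module.finrank ℝ (HSp 3) : ℝ) < 5 := by
    have hfr : Module.finrank ℝ (HSp 3) = 4 := by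
      rw [Module.finrank_prod, finrank_euclideanSpace]
      simp
    rw [hfr]; norm_num
  have h := (integrable_one_add_norm (E := HSp 3) (μ := volume) h45).const_mul 10000000
  have heq : (fun x : HSp 3 => 10000000 * ((1+‖x‖)^5)⁻¹)
      = (fun x : HSp 3 => 10000000 * (1+‖x‖) ^ (-(5:ℝ))) := by
    funext x
    rw [Real.rpow_neg (by positivity), ← Real.rpow_natCast (1+‖x‖) 5]
    norm_num
  rw [heq]
  exact h

def UU : Set (HSp 3) := {x : HSp 3 | 0 < x.2}

lemma UU_meas : MeasurableSet UU := measurableSet_lt measurable_const measurable_snd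

def hh (x : HSp 3) : ℝ := x.2^2 * lapHorizW4 x * Z4 x - fG x

lemma hh_intOn : IntegrableOn hh UU := by
  apply Integrable.mono' MM_int.restrict ((f0_meas.sub fG_meas).aestronglyMeasurable)
  rw [ae_restrict_iff' UU_meas]
  exact ae_of_all _ fun x hx => by
    rw [Real.norm_eq_abs]
    exact hh_bound x hx


end Aux19

end AuxSection19

/-- `∫_{B⁴₊(0,R)} x₄² Δ_{x̄}W_{1,0} Z⁰_{1,0} dx = (π/8)|S²| log R + O(1)`
as `R → ∞`, with `|S²| = 4π`. -/
theorem integral_x4sq_laphoriz_W4_Z4_log :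
    ∃ C : ℝ, 0 < C ∧ ∀ R : ℝ, 2 ≤ R →
      |(∫ x in {x : HSp 3 | 0 < x.2 ∧ rad x < R}, x.2 ^ 2 * lapHorizW4 x * Z4 x)
          - Real.pi / 8 * (4 * Real.pi) * Real.log R| ≤ C := by
  classical
  have hC0 : 0 ≤ ∫ x in Aux19.UU, |Aux19.hh x| := integral_nonneg fun x => abs_nonneg _
  refine ⟨(∫ x in Aux19.UU, |Aux19.hh x|) + 1, by linarith, ?_⟩
  intro R hR
  have hR1 : (1:ℝ) ≤ R := by linarith
  have hR0 : (0:ℝ) < R := by linarith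
  have hset : {x : HSp 3 | 0 < x.2 ∧ rad x < R} = Aux19.SS R := by
    ext x
    simp only [mem_setOf_eq, Aux19.SS, rad]
    constructor
    · rintro ⟨h1, h2⟩; exact ⟨h1, (Real.sqrt_lt' hR0).mp h2⟩
    · rintro ⟨h1, h2⟩; exact ⟨h1, (Real.sqrt_lt' hR0).mpr h2⟩
  rw [hset]
  have hSsub : Aux19.SS R ⊆ Aux19.UU := fun x hx => hx.1
  have hSfin : volume (Aux19.SS R) ≠ ⊤ := by
    have hsub : Aux19.SS R ⊆ Metric.ball (0 : HSp 3) R := by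
      intro x hx
      rw [Metric.mem_ball, dist_zero_right]
      exact lt_of_le_of_lt (Aux19.norm_le_of_sq x) ((Real.sqrt_lt' hR0).mpr hx.2)
    exact ((measure_mono hsub).trans_lt measure_ball_lt_top).ne
  have hfG_bd : ∀ x : HSp 3, ‖Aux19.fG x‖ ≤ 8 := by
    intro x
    rw [Real.norm_eq_abs]
    by_cases h : 1 ≤ ‖x.1‖^2 + x.2^2
    · simp only [Aux19.fG]; rw [if_pos h]; exact Aux19.ggn_abs_le h
    · simp only [Aux19.fG]; rw [if_neg h]; simp
  have hfG_int : IntegrableOn Aux19.fG (Aux19.SS R) :=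
    Measure.integrableOn_of_bounded hSfin Aux19.fG_meas.aestronglyMeasurable
      (ae_of_all _ hfG_bd)
  have hhh_int : IntegrableOn Aux19.hh (Aux19.SS R) := Aux19.hh_intOn.mono_set hSsub
  have hsplit : ∫ x in Aux19.SS R, x.2^2 * lapHorizW4 x * Z4 x
      = (∫ x in Aux19.SS R, Aux19.fG x) + ∫ x in Aux19.SS R, Aux19.hh x := by
    rw [← integral_add hfG_int hhh_int]
    refine setIntegral_congr_fun (Aux19.SS_meas R) fun x _ => ?_
    simp only [Aux19.hh]; ring
  rw [hsplit, Aux19.lemA hR1, add_sub_cancel_left]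
  have h1 : |∫ x in Aux19.SS R, Aux19.hh x| ≤ ∫ x in Aux19.SS R, |Aux19.hh x| := by
    simpa [Real.norm_eq_abs] using
      norm_integral_le_integral_norm (μ := volume.restrict (Aux19.SS R)) Aux19.hh
  have h2 : (∫ x in Aux19.SS R, |Aux19.hh x|) ≤ ∫ x in Aux19.UU, |Aux19.hh x| := by
    apply setIntegral_mono_set Aux19.hh_intOn.abs
      (ae_of_all _ fun x => abs_nonneg _)
      (HasSubset.Subset.eventuallyLE hSsub)
  linarith
end
end
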